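/- arXiv:2306.16352 — 4 statements merged into one kernel-verified Lean document; each statement's English description precedes it below -/
import Mathlib

section
/- Let η ∈ (0, 1/2), γ ∈ (0, 1), and let w* ∈ ℝ^d be a unit vector. For any w ∈ ℝ^d, x ∈ ℝ^d with |w*·x| ≥ γ, and y ∈ {−1, 1}, one has (g_η(w; x, y) − g_η(w*; x, y)) · (w − w*) ≥ (1−2η)·γ·1{sign(w·x) ≠ sign(w*·x)}. -/
open scoped RealInnerProductSpace

/-- `sign(t) = 1` if `t ≥ 0` and `-1` otherwise. -/
noncomputable def sgn (t : ℝ) : ℝ := if 0 ≤ t then 1 else -1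

/-- `g_η(w; x, y) := (1/2)·((1−2η)·sign(w·x) − y)·x`. -/
noncomputable def gEta {d : ℕ} (η : ℝ) (w x : EuclideanSpace ℝ (Fin d)) (y : ℝ) :
    EuclideanSpace ℝ (Fin d) :=
  ((1 / 2) * ((1 - 2 * η) * sgn ⟪w, x⟫ - y)) • x

theorem stmt_3 {d : ℕ} (η γ : ℝ) (hη : η ∈ Set.Ioo (0 : ℝ) (1 / 2))
    (hγ : γ ∈ Set.Ioo (0 : ℝ) 1)
    (wstar : EuclideanSpace ℝ (Fin d)) (hws : ‖wstar‖ = 1)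
    (w x : EuclideanSpace ℝ (Fin d)) (hx : γ ≤ |⟪wstar, x⟫|)
    (y : ℝ) (hy : y = -1 ∨ y = 1) :
    (1 - 2 * η) * γ * (if sgn ⟪w, x⟫ ≠ sgn ⟪wstar, x⟫ then (1 : ℝ) else 0) ≤
      ⟪gEta η w x y - gEta η wstar x y, w - wstar⟫ := by
  obtain ⟨hη1, hη2⟩ := hη
  obtain ⟨hγ1, hγ2⟩ := hγ
  have key : ⟪gEta η w x y - gEta η wstar x y, w - wstar⟫ =
      (1 / 2) * (1 - 2 * η) * (sgn ⟪w, x⟫ - sgn ⟪wstar, x⟫) *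
        (⟪w, x⟫ - ⟪wstar, x⟫) := by
    rw [gEta, gEta, ← sub_smul, real_inner_smul_left, inner_sub_right,
      real_inner_comm x w, real_inner_comm x wstar]
    ring
  rw [key]
  set a := ⟪w, x⟫ with ha
  set b := ⟪wstar, x⟫ with hb
  by_cases h : sgn a = sgn b
  · simp [h]
  · simp only [h, ne_eq, not_false_eq_true, if_true, mul_one]
    unfold sgn at *
    rcases le_or_gt 0 a with h1 | h1 <;> rcases le_or_gt 0 b with h2 | h2
    · simp [h1, h2] at h
    · rw [if_pos h1, if_neg (not_le.mpr h2)]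
      rw [abs_of_neg h2] at hx
      nlinarith
    · rw [if_neg (not_le.mpr h1), if_pos h2]
      rw [abs_of_nonneg h2] at hx
      nlinarith
    · simp [not_le.mpr h1, not_le.mpr h2] at h
end

section
/- There is an absolute constant κ > 0 such that for every c ∈ (0, 1/2) and every sufficiently large d ∈ ℤ₊, there exists a set S ⊆ {±1}^d with |S| ≥ 2^{κ·d^c} such that every pair of distinct vectors v, u ∈ S satisfies |v·u| < d^{1/2 + c}. -/
set_option maxHeartbeats 1000000


/-- The ±1 value of a hypercube coordinate encoded by a boolean. -/
def sgnB (b : Bool) : ℤ := if b then 1 else -1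

/-- Inner product `v·u` of two vertices of the hypercube `{±1}^d`. -/
def dotB {d : ℕ} (v u : Fin d → Bool) : ℤ := ∑ i, sgnB (v i) * sgnB (u i)

open Finset

lemma dotB_self {d : ℕ} (v : Fin d → Bool) : dotB v v = d := by
  have : ∀ b, sgnB b * sgnB b = 1 := by decide
  simp [dotB, this]

lemma dotB_comm {d : ℕ} (v u : Fin d → Bool) : dotB v u = dotB u v := by
  simp [dotB, mul_comm]

lemma sum_bool_exp (l a : ℝ) (ha : a = 1 ∨ a = -1) :
    ∑ b : Bool, Real.exp (l * (a * (sgnB b : ℝ))) = Real.exp l + Real.exp (-l) := by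
  rcases ha with h | h <;> simp [sgnB, h] <;> ring_nf <;> rw [add_comm]

lemma tail_bound {d : ℕ} (w : Fin d → ℝ) (hw : ∀ i, w i = 1 ∨ w i = -1) (T l : ℝ)
    (hl : 0 ≤ l) :
    ((univ.filter fun u : Fin d → Bool => T ≤ ∑ i, w i * (sgnB (u i) : ℝ)).card : ℝ) ≤
      Real.exp (-(l * T)) * (Real.exp l + Real.exp (-l)) ^ d := by
  classical
  set F := univ.filter fun u : Fin d → Bool => T ≤ ∑ i, w i * (sgnB (u i) : ℝ) with hF
  have step1 : (F.card : ℝ) ≤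
      ∑ u ∈ F, Real.exp (-(l * T)) * ∏ i, Real.exp (l * (w i * (sgnB (u i) : ℝ))) := by
    rw [Finset.card_eq_sum_ones F]
    push_cast
    refine Finset.sum_le_sum fun u hu => ?_
    have hu' : T ≤ ∑ i, w i * (sgnB (u i) : ℝ) := (Finset.mem_filter.mp hu).2
    have : Real.exp (-(l * T)) * ∏ i, Real.exp (l * (w i * (sgnB (u i) : ℝ)))
        = Real.exp (l * ((∑ i, w i * (sgnB (u i) : ℝ)) - T)) := by
      rw [← Real.exp_sum, ← Real.exp_add]
      rw [← Finset.mul_sum]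
      ring_nf
    rw [this]
    calc (1 : ℝ) = Real.exp 0 := (Real.exp_zero).symm
    _ ≤ _ := Real.exp_le_exp.mpr (by
        have := sub_nonneg.mpr hu'
        positivity)
  have step2 : ∑ u ∈ F, Real.exp (-(l * T)) * ∏ i, Real.exp (l * (w i * (sgnB (u i) : ℝ)))
      ≤ ∑ u : Fin d → Bool, Real.exp (-(l * T)) * ∏ i, Real.exp (l * (w i * (sgnB (u i) : ℝ))) := by
    refine Finset.sum_le_sum_of_subset_of_nonneg (Finset.filter_subset _ _) fun u _ _ => ?_
    positivity
  have step3 : ∑ u : Fin d → Bool, Real.exp (-(l * T)) * ∏ i, Real.exp (l * (w i * (sgnB (u i) : ℝ)))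
      = Real.exp (-(l * T)) * (Real.exp l + Real.exp (-l)) ^ d := by
    rw [← Finset.mul_sum]
    congr 1
    have swap : (∑ u : Fin d → Bool, ∏ i, Real.exp (l * (w i * (sgnB (u i) : ℝ))))
        = ∏ i : Fin d, ∑ b : Bool, Real.exp (l * (w i * (sgnB b : ℝ))) := by
      rw [Finset.prod_univ_sum]
      rw [Fintype.piFinset_univ]
    rw [swap]
    rw [Finset.prod_congr rfl fun i _ => sum_bool_exp l (w i) (hw i)]
    simp
  linarith

lemma sgnB_cast_pm (b : Bool) : (sgnB b : ℝ) = 1 ∨ (sgnB b : ℝ) = -1 := by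
  cases b <;> simp [sgnB]

/-- Chernoff bound on the number of bad partners of a fixed vertex. -/
lemma bad_count {d : ℕ} (v : Fin d → Bool) (T l : ℝ) (hl : 0 ≤ l) :
    ((univ.filter fun u : Fin d → Bool => T ≤ |(dotB v u : ℝ)|).card : ℝ) ≤
      2 * (Real.exp (-(l * T)) * (Real.exp l + Real.exp (-l)) ^ d) := by
  classical
  have hdot : ∀ u : Fin d → Bool, (dotB v u : ℝ) = ∑ i, (sgnB (v i) : ℝ) * (sgnB (u i) : ℝ) := by
    intro u; simp [dotB]
  have hsub : (univ.filter fun u : Fin d → Bool => T ≤ |(dotB v u : ℝ)|) ⊆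
      (univ.filter fun u : Fin d → Bool => T ≤ ∑ i, (sgnB (v i) : ℝ) * (sgnB (u i) : ℝ)) ∪
      (univ.filter fun u : Fin d → Bool => T ≤ ∑ i, (-(sgnB (v i) : ℝ)) * (sgnB (u i) : ℝ)) := by
    intro u hu
    have hu' : T ≤ |(dotB v u : ℝ)| := (Finset.mem_filter.mp hu).2
    rcases abs_cases (dotB v u : ℝ) with ⟨h, _⟩ | ⟨h, _⟩
    · refine Finset.mem_union_left _ (Finset.mem_filter.mpr ⟨Finset.mem_univ _, ?_⟩)
      rw [← hdot u]; linarith [hu']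
    · refine Finset.mem_union_right _ (Finset.mem_filter.mpr ⟨Finset.mem_univ _, ?_⟩)
      have : ∑ i, (-(sgnB (v i) : ℝ)) * (sgnB (u i) : ℝ) = -(dotB v u : ℝ) := by
        rw [hdot u, ← Finset.sum_neg_distrib]
        exact Finset.sum_congr rfl fun i _ => by ring
      rw [this]; linarith [hu']
  calc ((univ.filter fun u : Fin d → Bool => T ≤ |(dotB v u : ℝ)|).card : ℝ)
      ≤ (((univ.filter fun u : Fin d → Bool => T ≤ ∑ i, (sgnB (v i) : ℝ) * (sgnB (u i) : ℝ)) ∪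
      (univ.filter fun u : Fin d → Bool => T ≤ ∑ i, (-(sgnB (v i) : ℝ)) * (sgnB (u i) : ℝ))).card : ℝ) := by
        exact_mod_cast Finset.card_le_card hsub
    _ ≤ ((univ.filter fun u : Fin d → Bool => T ≤ ∑ i, (sgnB (v i) : ℝ) * (sgnB (u i) : ℝ)).card : ℝ)
        + ((univ.filter fun u : Fin d → Bool => T ≤ ∑ i, (-(sgnB (v i) : ℝ)) * (sgnB (u i) : ℝ)).card : ℝ) := by
        exact_mod_cast Finset.card_union_le _ _
    _ ≤ 2 * (Real.exp (-(l * T)) * (Real.exp l + Real.exp (-l)) ^ d) := by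
        have h1 := tail_bound (fun i => (sgnB (v i) : ℝ)) (fun i => sgnB_cast_pm (v i)) T l hl
        have h2 := tail_bound (fun i => -(sgnB (v i) : ℝ))
          (fun i => by rcases sgnB_cast_pm (v i) with h | h <;> simp [h]) T l hl
        linarith

/-- Greedy construction of a large separated set. -/
lemma greedy {d : ℕ} (T : ℝ) (B : ℝ)
    (hB : ∀ v : Fin d → Bool, ((univ.filter fun u => T ≤ |(dotB v u : ℝ)|).card : ℝ) ≤ B)
    (hself : ∀ v : Fin d → Bool, T ≤ |(dotB v v : ℝ)|) :
    ∀ n : ℕ, (n : ℝ) * B < 2 ^ d →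
    ∃ S : Finset (Fin d → Bool), S.card = n ∧
      ∀ v ∈ S, ∀ u ∈ S, v ≠ u → |(dotB v u : ℝ)| < T := by
  classical
  have hB0 : 0 ≤ B := le_trans (by positivity) (hB (fun _ => true))
  intro n
  induction n with
  | zero => intro _; exact ⟨∅, by simp⟩
  | succ n ih =>
    intro hn
    have hn' : (n : ℝ) * B < 2 ^ d := by
      refine lt_of_le_of_lt ?_ hn
      have : (n : ℝ) ≤ (n + 1 : ℕ) := by push_cast; linarith
      exact mul_le_mul_of_nonneg_right (by push_cast; linarith) hB0
    obtain ⟨S, hcard, hgood⟩ := ih hn'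
    set U := S.biUnion (fun v => univ.filter fun u => T ≤ |(dotB v u : ℝ)|) with hU
    have hUnat : U.card ≤ ∑ v ∈ S, (univ.filter fun u => T ≤ |(dotB v u : ℝ)|).card :=
      Finset.card_biUnion_le
    have hUcard : (U.card : ℝ) < 2 ^ d := by
      calc (U.card : ℝ) ≤ ∑ v ∈ S, ((univ.filter fun u => T ≤ |(dotB v u : ℝ)|).card : ℝ) := by
            exact_mod_cast hUnat
        _ ≤ ∑ _v ∈ S, B := Finset.sum_le_sum fun v _ => hB v
        _ = (n : ℝ) * B := by rw [Finset.sum_const, hcard]; push_cast; ring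
        _ < 2 ^ d := hn'
    have : ∃ x : Fin d → Bool, x ∉ U := by
      by_contra h
      push_neg at h
      have : (Finset.univ : Finset (Fin d → Bool)).card ≤ U.card :=
        Finset.card_le_card fun x _ => h x
      rw [Finset.card_univ] at this
      have hcardfun : Fintype.card (Fin d → Bool) = 2 ^ d := by simp
      rw [hcardfun] at this
      exact absurd hUcard (not_lt.mpr (by exact_mod_cast this))
    obtain ⟨x, hx⟩ := this
    have hgoodx : ∀ v ∈ S, |(dotB v x : ℝ)| < T := by
      intro v hv
      by_contra h
      exact hx (Finset.mem_biUnion.mpr ⟨v, hv, Finset.mem_filter.mpr ⟨Finset.mem_univ _, not_lt.mp h⟩⟩)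
    have hxS : x ∉ S := by
      intro h
      exact hx (Finset.mem_biUnion.mpr ⟨x, h, Finset.mem_filter.mpr ⟨Finset.mem_univ _, hself x⟩⟩)
    refine ⟨insert x S, by rw [Finset.card_insert_of_notMem hxS, hcard], ?_⟩
    intro v hv u hu hvu
    rcases Finset.mem_insert.mp hv with rfl | hv' <;> rcases Finset.mem_insert.mp hu with rfl | hu'
    · exact absurd rfl hvu
    · rw [dotB_comm]; exact hgoodx u hu'
    · exact hgoodx v hv'
    · exact hgood v hv' u hu' hvu

theorem stmt_11 :
    ∃ κ > (0 : ℝ), ∀ c ∈ Set.Ioo (0 : ℝ) (1 / 2), ∃ d₀ : ℕ, ∀ d : ℕ, d₀ ≤ d →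
      ∃ S : Finset (Fin d → Bool),
        (2 : ℝ) ^ (κ * (d : ℝ) ^ c) ≤ S.card ∧
        ∀ v ∈ S, ∀ u ∈ S, v ≠ u → |(dotB v u : ℝ)| < (d : ℝ) ^ ((1 : ℝ) / 2 + c) := by
  refine ⟨1, one_pos, ?_⟩
  rintro c ⟨hc0, hc2⟩
  refine ⟨⌈(16 : ℝ) ^ (1 / c)⌉₊ + 1, ?_⟩
  intro d hd
  have hd1 : 1 ≤ d := le_trans (Nat.le_add_left 1 _) hd
  have hdR : (1 : ℝ) ≤ (d : ℝ) := by exact_mod_cast hd1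
  have hdpos : (0 : ℝ) < d := by linarith
  set x := (d : ℝ) ^ c with hxdef
  have hx0 : 0 ≤ x := Real.rpow_nonneg (by positivity) c
  have hx16 : (16 : ℝ) ≤ x := by
    have h1 : (16 : ℝ) ^ (1 / c) ≤ (d : ℝ) := by
      calc (16 : ℝ) ^ (1 / c) ≤ (⌈(16 : ℝ) ^ (1 / c)⌉₊ : ℝ) := Nat.le_ceil _
        _ ≤ (d : ℝ) := by
            have : ⌈(16 : ℝ) ^ (1 / c)⌉₊ ≤ d := le_trans (Nat.le_add_right _ 1) hd
            exact_mod_cast this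
    have h2 : ((16 : ℝ) ^ (1 / c)) ^ c ≤ (d : ℝ) ^ c :=
      Real.rpow_le_rpow (by positivity) h1 (le_of_lt hc0)
    rwa [← Real.rpow_mul (by norm_num : (0:ℝ) ≤ 16), one_div,
      inv_mul_cancel₀ (ne_of_gt hc0), Real.rpow_one] at h2
  set T := (d : ℝ) ^ ((1 : ℝ) / 2 + c) with hTdef
  have hT0 : 0 ≤ T := Real.rpow_nonneg (by positivity) _
  have hTd : T ≤ (d : ℝ) := by
    calc T ≤ (d : ℝ) ^ (1 : ℝ) :=
          Real.rpow_le_rpow_of_exponent_le hdR (by linarith)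
      _ = (d : ℝ) := Real.rpow_one _
  have hT2 : T ^ 2 = (d : ℝ) * x ^ 2 := by
    have e1 : T ^ 2 = (d : ℝ) ^ ((1 : ℝ) + 2 * c) := by
      rw [sq, hTdef, ← Real.rpow_add hdpos]; ring_nf
    have e2 : (d : ℝ) * x ^ 2 = (d : ℝ) ^ ((1 : ℝ) + 2 * c) := by
      calc (d : ℝ) * x ^ 2 = (d : ℝ) ^ (1 : ℝ) * ((d : ℝ) ^ c * (d : ℝ) ^ c) := by
            rw [Real.rpow_one, sq, hxdef]
        _ = (d : ℝ) ^ ((1 : ℝ) + (c + c)) := by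
            rw [← Real.rpow_add hdpos, ← Real.rpow_add hdpos]
        _ = (d : ℝ) ^ ((1 : ℝ) + 2 * c) := by congr 1; ring
    rw [e1, e2]
  set l := T / d with hldef
  have hl : 0 ≤ l := by positivity
  have harith : (d : ℝ) * (l ^ 2 / 2) - l * T = -(x ^ 2 / 2) := by
    rw [hldef]
    field_simp
    nlinarith [hT2]
  have hexp : Real.exp (-(l * T)) * (Real.exp l + Real.exp (-l)) ^ d ≤
      (2 : ℝ) ^ d * Real.exp (-(x ^ 2 / 2)) := by
    have hcosh : Real.exp l + Real.exp (-l) = 2 * Real.cosh l := by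
      rw [Real.cosh_eq]; ring
    have hpow : (Real.exp l + Real.exp (-l)) ^ d ≤ (2 : ℝ) ^ d * Real.exp ((d : ℝ) * (l ^ 2 / 2)) := by
      rw [hcosh]
      calc (2 * Real.cosh l) ^ d ≤ (2 * Real.exp (l ^ 2 / 2)) ^ d := by
            refine pow_le_pow_left₀ (by positivity) ?_ d
            have := Real.cosh_le_exp_half_sq l
            nlinarith [this]
        _ = (2 : ℝ) ^ d * Real.exp ((d : ℝ) * (l ^ 2 / 2)) := by
            rw [mul_pow, Real.exp_nat_mul]
    calc Real.exp (-(l * T)) * (Real.exp l + Real.exp (-l)) ^ d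
        ≤ Real.exp (-(l * T)) * ((2 : ℝ) ^ d * Real.exp ((d : ℝ) * (l ^ 2 / 2))) := by
          exact mul_le_mul_of_nonneg_left hpow (Real.exp_nonneg _)
      _ = (2 : ℝ) ^ d * Real.exp ((d : ℝ) * (l ^ 2 / 2) - l * T) := by
          rw [sub_eq_add_neg, Real.exp_add]; ring
      _ = (2 : ℝ) ^ d * Real.exp (-(x ^ 2 / 2)) := by rw [harith]
  set B : ℝ := 2 * ((2 : ℝ) ^ d * Real.exp (-(x ^ 2 / 2))) with hBdef
  have hB : ∀ v : Fin d → Bool,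
      ((Finset.univ.filter fun u => T ≤ |(dotB v u : ℝ)|).card : ℝ) ≤ B := by
    intro v
    calc ((Finset.univ.filter fun u => T ≤ |(dotB v u : ℝ)|).card : ℝ)
        ≤ 2 * (Real.exp (-(l * T)) * (Real.exp l + Real.exp (-l)) ^ d) := bad_count v T l hl
      _ ≤ B := by rw [hBdef]; linarith [hexp]
  have hself : ∀ v : Fin d → Bool, T ≤ |(dotB v v : ℝ)| := by
    intro v
    rw [dotB_self]
    push_cast
    rw [abs_of_nonneg (by positivity)]
    exact hTd
  set n := ⌈(2 : ℝ) ^ x⌉₊ with hndef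
  have hn_ge : (2 : ℝ) ^ x ≤ (n : ℝ) := Nat.le_ceil _
  have h2x1 : (1 : ℝ) ≤ (2 : ℝ) ^ x := by
    have := Real.rpow_le_rpow_of_exponent_le (by norm_num : (1:ℝ) ≤ 2) hx0
    rwa [Real.rpow_zero] at this
  have hn_le : (n : ℝ) < (2 : ℝ) ^ x + 1 := by
    exact_mod_cast Nat.ceil_lt_add_one (by positivity)
  have hkey : 4 * (2 : ℝ) ^ x * Real.exp (-(x ^ 2 / 2)) < 1 := by
    have h2x : (2 : ℝ) ^ x = Real.exp (Real.log 2 * x) := by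
      rw [Real.rpow_def_of_pos (by norm_num : (0:ℝ) < 2)]
    have hlog : Real.log 2 ≤ 1 := by
      have := Real.log_le_sub_one_of_pos (by norm_num : (0:ℝ) < 2)
      linarith
    have hexpo : Real.log 2 * x - x ^ 2 / 2 ≤ -4 := by nlinarith
    calc 4 * (2 : ℝ) ^ x * Real.exp (-(x ^ 2 / 2))
        = 4 * Real.exp (Real.log 2 * x - x ^ 2 / 2) := by
          rw [h2x, sub_eq_add_neg, Real.exp_add]; ring
      _ ≤ 4 * Real.exp (-4 : ℝ) := by
          exact mul_le_mul_of_nonneg_left (Real.exp_le_exp.mpr hexpo) (by norm_num)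
      _ < 1 := by
          have h5 : (5 : ℝ) ≤ Real.exp 4 := by
            have := Real.add_one_le_exp (4 : ℝ)
            linarith
          have hmul : Real.exp (-4 : ℝ) * Real.exp 4 = 1 := by
            rw [← Real.exp_add]; norm_num
          nlinarith [Real.exp_pos (-4 : ℝ)]
  have hnB : (n : ℝ) * B < 2 ^ d := by
    have hBpos : 0 ≤ B := by positivity
    have h1 : (n : ℝ) * B ≤ ((2 : ℝ) ^ x + 1) * B :=
      mul_le_mul_of_nonneg_right (le_of_lt hn_le) hBpos
    have h2 : ((2 : ℝ) ^ x + 1) * B ≤ (2 * (2 : ℝ) ^ x) * B := by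
      refine mul_le_mul_of_nonneg_right ?_ hBpos
      linarith
    have h3 : (2 * (2 : ℝ) ^ x) * B = (2 : ℝ) ^ d * (4 * (2 : ℝ) ^ x * Real.exp (-(x ^ 2 / 2))) := by
      rw [hBdef]; ring
    have h4 : (2 : ℝ) ^ d * (4 * (2 : ℝ) ^ x * Real.exp (-(x ^ 2 / 2))) < (2 : ℝ) ^ d * 1 := by
      exact mul_lt_mul_of_pos_left hkey (by positivity)
    calc (n : ℝ) * B ≤ ((2 : ℝ) ^ x + 1) * B := h1
      _ ≤ (2 * (2 : ℝ) ^ x) * B := h2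
      _ < (2 : ℝ) ^ d := by rw [h3]; linarith
  obtain ⟨S, hScard, hSgood⟩ := greedy T B hB hself n hnB
  refine ⟨S, ?_, hSgood⟩
  rw [one_mul, hScard]
  exact hn_ge
end

section
/- Let d, m, k be nonnegative integers with m ≤ d and k ≤ d/2. Then the normalized Kravchuk polynomial satisfies |K(d, m, k)| ≤ e^k · 2^{3k} · ( (k/d)^{k/2} + (|d/2 − m|/d)^k ). -/
/-- The normalized Kravchuk polynomial
`K(n, a, b) = (1/(C(n,a)·C(n,b))) · Σ_{A,B ⊆ [n], |A|=a, |B|=b} (−1)^{|A ∩ B|}`. -/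
noncomputable def krav (n a b : ℕ) : ℝ :=
  (∑ A ∈ Finset.powersetCard a (Finset.univ : Finset (Fin n)),
      ∑ B ∈ Finset.powersetCard b (Finset.univ : Finset (Fin n)),
        (-1 : ℝ) ^ (A ∩ B).card) /
    ((n.choose a) * (n.choose b))

open Polynomial Finset

noncomputable def Pm (d m : ℕ) : Polynomial ℝ := (1 + X) ^ (d - m) * (1 - X) ^ m

noncomputable def Sm (d m k : ℕ) : ℝ := (Pm d m).coeff k

lemma bridge_inner (d m k : ℕ) (hm : m ≤ d) (A : Finset (Fin d)) (hA : A.card = m) :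
    ∑ B ∈ powersetCard k (univ : Finset (Fin d)), (-1 : ℝ) ^ (A ∩ B).card = Sm d m k := by
  classical
  set e : Fin d → ℝ := fun i => if i ∈ A then -1 else 1 with he
  have hprod : ∏ i ∈ (univ : Finset (Fin d)), (C (e i) * X + 1) = Pm d m := by
    rw [← Finset.prod_mul_prod_compl A]
    have h1 : ∏ i ∈ A, (C (e i) * X + 1) = (1 - X) ^ m := by
      have : ∀ i ∈ A, (C (e i) * X + 1) = (1 - X) := by
        intro i hi; simp [he, hi]; ring
      rw [Finset.prod_congr rfl this, Finset.prod_const, hA]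
    have h2 : ∏ i ∈ Aᶜ, (C (e i) * X + 1) = (1 + X) ^ (d - m) := by
      have : ∀ i ∈ Aᶜ, (C (e i) * X + 1) = (1 + X) := by
        intro i hi
        simp only [Finset.mem_compl] at hi
        simp [he, hi]; ring
      rw [Finset.prod_congr rfl this, Finset.prod_const, Finset.card_compl, Fintype.card_fin, hA]
    rw [h1, h2, Pm, mul_comm]
  have hexp : (∏ i ∈ (univ : Finset (Fin d)), (C (e i) * X + 1)).coeff k
      = ∑ B ∈ powersetCard k (univ : Finset (Fin d)), (-1 : ℝ) ^ (A ∩ B).card := by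
    rw [Finset.prod_add]
    rw [finset_sum_coeff]
    have hterm : ∀ t ∈ (univ : Finset (Fin d)).powerset,
        ((∏ i ∈ t, C (e i) * X) * ∏ i ∈ univ \ t, (1 : ℝ[X])).coeff k
        = if t.card = k then (-1 : ℝ) ^ (A ∩ t).card else 0 := by
      intro t _
      have : (∏ i ∈ t, C (e i) * X) = C (∏ i ∈ t, e i) * X ^ t.card := by
        rw [Finset.prod_mul_distrib, Finset.prod_const, map_prod]
      rw [Finset.prod_const_one, mul_one, this, coeff_C_mul, coeff_X_pow]
      have hee : ∏ i ∈ t, e i = (-1 : ℝ) ^ (A ∩ t).card := by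
        rw [he]
        rw [Finset.prod_ite (fun _ => (-1:ℝ)) (fun _ => (1:ℝ))]
        simp [Finset.filter_mem_eq_inter, Finset.inter_comm]
      rw [hee]
      by_cases h : t.card = k
      · simp [h]
      · rw [if_neg (fun hh : k = #t => h hh.symm), if_neg h, mul_zero]
    rw [Finset.sum_congr rfl hterm, Finset.sum_ite, Finset.sum_const_zero, add_zero,
      Finset.powersetCard_eq_filter]
  rw [← hexp, hprod]; rfl

lemma krav_eq (d m k : ℕ) (hm : m ≤ d) :
    krav d m k = Sm d m k / (d.choose k) := by
  rw [krav]
  have h1 : ∀ A ∈ Finset.powersetCard m (Finset.univ : Finset (Fin d)),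
      ∑ B ∈ Finset.powersetCard k (Finset.univ : Finset (Fin d)), (-1 : ℝ) ^ (A ∩ B).card
        = Sm d m k := by
    intro A hA
    exact bridge_inner d m k hm A (Finset.mem_powersetCard.1 hA).2
  rw [Finset.sum_congr rfl h1, Finset.sum_const, Finset.card_powersetCard, Finset.card_univ,
    Fintype.card_fin, nsmul_eq_mul]
  have hc : ((d.choose m : ℝ)) ≠ 0 := by
    exact_mod_cast (Nat.choose_pos hm).ne'
  rw [mul_div_mul_left _ _ hc]

lemma polyid (a b : ℕ) :
    (1 - X ^ 2) * derivative ((1 + X) ^ a * (1 - X) ^ b)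
      = (C ((a : ℝ) - b) - C ((a : ℝ) + b) * X) * ((1 + X) ^ a * (1 - X) ^ b) := by
  have h1 : (1 + X : ℝ[X]) * ((a : ℝ[X]) * (1 + X) ^ (a - 1)) = (a : ℝ[X]) * (1 + X) ^ a := by
    cases a with
    | zero => simp
    | succ n => rw [Nat.succ_sub_one, pow_succ]; ring
  have h2 : (1 - X : ℝ[X]) * ((b : ℝ[X]) * (1 - X) ^ (b - 1)) = (b : ℝ[X]) * (1 - X) ^ b := by
    cases b with
    | zero => simp
    | succ n => rw [Nat.succ_sub_one, pow_succ]; ring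
  have hd : derivative ((1 + X : ℝ[X]) ^ a * (1 - X) ^ b)
      = (a : ℝ[X]) * (1 + X) ^ (a - 1) * (1 - X) ^ b
        - (1 + X) ^ a * ((b : ℝ[X]) * (1 - X) ^ (b - 1)) := by
    rw [derivative_mul, derivative_pow, derivative_pow]
    simp
    ring
  rw [hd]
  have key : (1 - X ^ 2 : ℝ[X]) = (1 - X) * (1 + X) := by ring
  rw [key]
  calc (1 - X) * (1 + X) * ((a : ℝ[X]) * (1 + X) ^ (a - 1) * (1 - X) ^ b
        - (1 + X) ^ a * ((b : ℝ[X]) * (1 - X) ^ (b - 1)))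
      = (1 - X) * ((1 + X) * ((a : ℝ[X]) * (1 + X) ^ (a - 1))) * (1 - X) ^ b
        - (1 + X) * (1 + X) ^ a * ((1 - X) * ((b : ℝ[X]) * (1 - X) ^ (b - 1))) := by ring
    _ = (1 - X) * ((a : ℝ[X]) * (1 + X) ^ a) * (1 - X) ^ b
        - (1 + X) * (1 + X) ^ a * ((b : ℝ[X]) * (1 - X) ^ b) := by rw [h1, h2]
    _ = (C ((a : ℝ) - b) - C ((a : ℝ) + b) * X) * ((1 + X) ^ a * (1 - X) ^ b) := by
        push_cast
        simp only [map_sub, map_add, Polynomial.C_eq_natCast]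
        ring

lemma Sm_zero (d m : ℕ) : Sm d m 0 = 1 := by
  rw [Sm, Polynomial.coeff_zero_eq_eval_zero, Pm]
  simp

lemma Sm_eq_zero (d m j : ℕ) (hm : m ≤ d) (h : d < j) : Sm d m j = 0 := by
  rw [Sm]
  apply Polynomial.coeff_eq_zero_of_natDegree_lt
  calc (Pm d m).natDegree ≤ ((1 + X : ℝ[X]) ^ (d - m)).natDegree + ((1 - X : ℝ[X]) ^ m).natDegree :=
        Polynomial.natDegree_mul_le
    _ ≤ (d - m) * 1 + m * 1 := by
        gcongr <;>
          [exact Polynomial.natDegree_pow_le_of_le _ (by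
            simpa using Polynomial.natDegree_add_le (1 : ℝ[X]) X);
           exact Polynomial.natDegree_pow_le_of_le _ (by
            simpa using Polynomial.natDegree_sub_le (1 : ℝ[X]) X)]
    _ = d := by omega
    _ < j := h

lemma recS (d m : ℕ) (hm : m ≤ d) (k : ℕ) :
    ((k : ℝ) + 2) * Sm d m (k + 2)
      = ((d : ℝ) - 2 * m) * Sm d m (k + 1) - ((d : ℝ) - k) * Sm d m k := by
  have hid := polyid (d - m) m
  have hcast : ((d - m : ℕ) : ℝ) = (d : ℝ) - m := by
    push_cast [hm]; ring
  rw [hcast] at hid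
  have hC : ((d : ℝ) - m) - m = (d : ℝ) - 2 * m := by ring
  have hC2 : ((d : ℝ) - m) + m = (d : ℝ) := by ring
  rw [hC, hC2] at hid
  have h := congrArg (fun p => Polynomial.coeff p (k + 1)) hid
  rw [sub_mul, Polynomial.coeff_sub, one_mul] at h
  rw [mul_comm (X ^ 2 : ℝ[X]) _] at h
  rw [Polynomial.coeff_mul_X_pow'] at h
  rw [sub_mul, Polynomial.coeff_sub, Polynomial.coeff_C_mul] at h
  rw [mul_assoc, Polynomial.coeff_C_mul, Polynomial.coeff_X_mul] at h
  rw [Polynomial.coeff_derivative] at h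
  have hleft2 : (if 2 ≤ k + 1 then (derivative (Pm d m)).coeff (k + 1 - 2) else 0)
      = (k : ℝ) * Sm d m k := by
    cases k with
    | zero => simp
    | succ n =>
        rw [if_pos (by omega)]
        have : n + 1 + 1 - 2 = n := by omega
        rw [this, Polynomial.coeff_derivative]
        push_cast
        rw [Sm]
        ring
  rw [show ((1 + X : ℝ[X]) ^ (d - m) * (1 - X) ^ m) = Pm d m from rfl] at h
  rw [hleft2] at h
  simp only [Sm] at h ⊢
  push_cast at h ⊢
  have e2 : k + 1 + 1 = k + 2 := rfl
  rw [e2] at h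
  linarith [h]

noncomputable def Kn (d m k : ℕ) : ℝ := Sm d m k / (d.choose k)

lemma Sm_eq_choose_mul (d m j : ℕ) (hm : m ≤ d) :
    Sm d m j = (d.choose j : ℝ) * Kn d m j := by
  by_cases h : j ≤ d
  · rw [Kn, mul_div_cancel₀]
    exact_mod_cast (Nat.choose_pos h).ne'
  · rw [Sm_eq_zero d m j hm (by omega), Nat.choose_eq_zero_of_lt (by omega)]
    simp [Kn, Sm_eq_zero d m j hm (by omega)]

lemma recK (d m k : ℕ) (hm : m ≤ d) (h : k + 1 ≤ d) :
    ((d : ℝ) - (k + 1)) * Kn d m (k + 2)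
      = ((d : ℝ) - 2 * m) * Kn d m (k + 1) - ((k : ℝ) + 1) * Kn d m k := by
  have hrec := recS d m hm k
  rw [Sm_eq_choose_mul d m (k+2) hm, Sm_eq_choose_mul d m (k+1) hm,
    Sm_eq_choose_mul d m k hm] at hrec
  have id1 : ((k : ℝ) + 2) * (d.choose (k + 2) : ℝ)
      = ((d : ℝ) - (k + 1)) * (d.choose (k + 1) : ℝ) := by
    have := Nat.choose_succ_right_eq d (k + 1)
    have hcast : ((d.choose (k + 2) * (k + 2) : ℕ) : ℝ)
        = ((d.choose (k + 1) * (d - (k + 1)) : ℕ) : ℝ) := by exact_mod_cast congrArg (fun x : ℕ => (x : ℝ)) this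
    push_cast [h] at hcast
    linarith
  have id2 : ((d : ℝ) - k) * (d.choose k : ℝ) = ((k : ℝ) + 1) * (d.choose (k + 1) : ℝ) := by
    have := Nat.choose_succ_right_eq d k
    have hcast : ((d.choose (k + 1) * (k + 1) : ℕ) : ℝ)
        = ((d.choose k * (d - k) : ℕ) : ℝ) := by exact_mod_cast congrArg (fun x : ℕ => (x : ℝ)) this
    push_cast [show k ≤ d by omega] at hcast
    linarith
  have hc1 : ((d.choose (k + 1) : ℝ)) ≠ 0 := by
    exact_mod_cast (Nat.choose_pos h).ne'
  apply mul_left_cancel₀ hc1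
  linear_combination hrec - Kn d m (k + 2) * id1 - Kn d m k * id2

lemma Sm_one (d m : ℕ) (hm : m ≤ d) : Sm d m 1 = (d : ℝ) - 2 * m := by
  have hid := polyid (d - m) m
  have hcast : ((d - m : ℕ) : ℝ) = (d : ℝ) - m := by push_cast [hm]; ring
  rw [hcast] at hid
  have hC : ((d : ℝ) - m) - m = (d : ℝ) - 2 * m := by ring
  have hC2 : ((d : ℝ) - m) + m = (d : ℝ) := by ring
  rw [hC, hC2] at hid
  have h := congrArg (fun p => Polynomial.coeff p 0) hid
  simp only [Polynomial.mul_coeff_zero, Polynomial.coeff_sub, Polynomial.coeff_one,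
    Polynomial.coeff_X_pow, Polynomial.coeff_derivative, Polynomial.coeff_C,
    Polynomial.coeff_C_mul, Polynomial.coeff_X_zero, mul_zero] at h
  have h0 : (Pm d m).coeff 0 = 1 := Sm_zero d m
  rw [← Polynomial.mul_coeff_zero] at h
  rw [show ((1 + X : ℝ[X]) ^ (d - m) * (1 - X) ^ m) = Pm d m from rfl] at h
  rw [h0] at h
  norm_num at h
  rw [Sm]
  linarith

set_option maxHeartbeats 2000000 in
lemma Kn_bound (d m : ℕ) (hm : m ≤ d) :
    ∀ k : ℕ, (k : ℝ) ≤ (d : ℝ) / 2 →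
      |Kn d m k| ≤ (8 * Real.exp 1) ^ k *
        (((k : ℝ) / d) ^ ((k : ℝ) / 2) + (|(d : ℝ) / 2 - m| / d) ^ k) := by
  intro k
  induction k using Nat.strong_induction_on with
  | _ k ih =>
    have he2 : (2 : ℝ) ≤ Real.exp 1 := by
      have := Real.exp_one_gt_d9; norm_num at this ⊢; linarith
    match k with
    | 0 =>
      intro _
      have h0 : Kn d m 0 = 1 := by
        rw [Kn, Sm_zero]; simp
      rw [h0]
      have hs : (0:ℝ) ≤ |(d : ℝ) / 2 - m| / d := by positivity
      simp [Real.rpow_zero]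
    | 1 =>
      intro h1
      push_cast at h1
      have hd0 : (0:ℝ) < d := by linarith
      have hK : Kn d m 1 = ((d:ℝ) - 2*m)/d := by
        rw [Kn, Sm_one d m hm, Nat.choose_one_right]
      have habs : |((d:ℝ) - 2*m)/d| = 2 * (|(d:ℝ)/2 - m|/d) := by
        rw [abs_div, abs_of_pos hd0, show (d:ℝ) - 2*m = 2*((d:ℝ)/2 - m) by ring,
          abs_mul, abs_two]
        ring
      rw [hK, habs]
      have hs : (0:ℝ) ≤ |(d : ℝ) / 2 - m| / d := by positivity
      have hr : (0:ℝ) ≤ (((1:ℕ):ℝ)/d) ^ (((1:ℕ):ℝ)/2) := Real.rpow_nonneg (by positivity) _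
      push_cast at hr ⊢
      rw [pow_one, pow_one]
      have t2 : 2*(|(d:ℝ)/2 - m|/d) ≤ (8*Real.exp 1)*(|(d:ℝ)/2 - m|/d) :=
        mul_le_mul_of_nonneg_right (by linarith) hs
      have t3 : (|(d:ℝ)/2 - m|/d) ≤ (1/(d:ℝ))^((1:ℝ)/2) + (|(d:ℝ)/2 - m|/d) :=
        le_add_of_nonneg_left hr
      have t4 := mul_le_mul_of_nonneg_left t3 (by linarith : (0:ℝ) ≤ 8*Real.exp 1)
      linarith
    | (n+2) =>
      intro h2
      push_cast at h2
      have hd0 : (0:ℝ) < d := by linarith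
      have hn1d : n + 1 ≤ d := by
        have : ((n:ℝ)+1) ≤ d := by linarith
        exact_mod_cast this
      set s : ℝ := |(d:ℝ)/2 - m|/d with hs_def
      set E : ℝ := 8 * Real.exp 1 with hE_def
      have hE16 : (16:ℝ) ≤ E := by rw [hE_def]; linarith
      have hEpos : (0:ℝ) < E := by linarith
      have hFpos : (0:ℝ) < E ^ n := pow_pos hEpos n
      have hs0 : (0:ℝ) ≤ s := by rw [hs_def]; positivity
      have hds : |(d:ℝ) - 2*m| = 2*((d:ℝ)*s) := by
        have h1 : (d:ℝ) * s = |(d:ℝ)/2 - m| := by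
          rw [hs_def]; field_simp
        rw [h1, show (d:ℝ) - 2*m = 2*((d:ℝ)/2 - m) by ring, abs_mul, abs_two]
      have ih1 := ih (n+1) (by omega) (by push_cast; linarith)
      have ih0 := ih n (by omega) (by push_cast; linarith)
      push_cast at ih1 ih0 ⊢
      set t : ℝ := ((n:ℝ)+2)/d with ht_def
      have ht0 : (0:ℝ) < t := by rw [ht_def]; positivity
      set r : ℝ := t ^ ((1:ℝ)/2) with hr_def
      have hr0 : (0:ℝ) ≤ r := Real.rpow_nonneg ht0.le _
      have hrj : ∀ j : ℕ, t ^ ((j:ℝ)/2) = r ^ j := by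
        intro j
        rw [hr_def, ← Real.rpow_natCast (t ^ ((1:ℝ)/2)) j, ← Real.rpow_mul ht0.le]
        congr 1
        ring
      have hr2 : r ^ 2 = t := by
        rw [← hrj 2]
        rw [show ((2:ℕ):ℝ)/2 = 1 by norm_num, Real.rpow_one]
      -- bounds on the rpow terms
      have ha2 : (((n:ℝ)+2)/d) ^ (((n:ℝ)+2)/2) = r ^ (n+2) := by
        rw [← ht_def, show ((n:ℝ)+2) = ((n+2 : ℕ):ℝ) by push_cast; ring]
        exact hrj (n+2)
      have ha1 : (((n:ℝ)+1)/d) ^ (((n:ℝ)+1)/2) ≤ r ^ (n+1) := by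
        calc (((n:ℝ)+1)/d) ^ (((n:ℝ)+1)/2) ≤ t ^ (((n:ℝ)+1)/2) := by
              apply Real.rpow_le_rpow (by positivity) _ (by positivity)
              rw [ht_def]; gcongr; linarith
          _ = r ^ (n+1) := by
              rw [show ((n:ℝ)+1) = ((n+1 : ℕ):ℝ) by push_cast; ring]
              exact hrj (n+1)
      have ha0 : ((n:ℝ)/d) ^ ((n:ℝ)/2) ≤ r ^ n := by
        calc ((n:ℝ)/d) ^ ((n:ℝ)/2) ≤ t ^ ((n:ℝ)/2) := by
              apply Real.rpow_le_rpow (by positivity) _ (by positivity)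
              rw [ht_def]; gcongr; linarith
          _ = r ^ n := hrj n
      -- the recurrence bound
      have hden : (0:ℝ) < (d:ℝ) - ((n:ℝ)+1) := by linarith
      have hrec := recK d m n hm hn1d
      have hK2 : Kn d m (n+2) = (((d:ℝ)-2*m) * Kn d m (n+1) - ((n:ℝ)+1)*Kn d m n)
          / ((d:ℝ) - ((n:ℝ)+1)) := by
        rw [eq_div_iff hden.ne']
        linear_combination hrec
      have habs2 : |Kn d m (n+2)| ≤
          (2*((d:ℝ)*s) * |Kn d m (n+1)| + ((n:ℝ)+1) * |Kn d m n|) / ((d:ℝ) - ((n:ℝ)+1)) := by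
        rw [hK2, abs_div, abs_of_pos hden]
        gcongr
        calc |((d:ℝ)-2*m) * Kn d m (n+1) - ((n:ℝ)+1)*Kn d m n|
            ≤ |((d:ℝ)-2*m) * Kn d m (n+1)| + |((n:ℝ)+1)*Kn d m n| := by
              rw [sub_eq_add_neg]
              exact (abs_add_le _ _).trans (by rw [abs_neg])
          _ = 2*((d:ℝ)*s) * |Kn d m (n+1)| + ((n:ℝ)+1) * |Kn d m n| := by
              rw [abs_mul, abs_mul, hds, abs_of_nonneg (by positivity : (0:ℝ) ≤ (n:ℝ)+1)]

      have hB1 : |Kn d m (n+1)| ≤ E^(n+1) * (r^(n+1) + s^(n+1)) := by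
        refine ih1.trans ?_
        gcongr
      have hB0 : |Kn d m n| ≤ E^n * (r^n + s^n) := by
        refine ih0.trans ?_
        gcongr
      have ha2' : t ^ (((n:ℝ)+2)/2) = r ^ (n+2) := by
        rw [show ((n:ℝ)+2) = ((n+2:ℕ):ℝ) by push_cast; ring]
        exact hrj (n+2)
      rw [ha2']
      set w : ℝ := max s r with hw_def
      have hw0 : (0:ℝ) ≤ w := le_trans hs0 (le_max_left s r)
      have hsw : s ≤ w := le_max_left s r
      have hrw : r ≤ w := le_max_right s r
      have hwn2 : w^(n+2) ≤ r^(n+2) + s^(n+2) := by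
        rcases max_cases s r with ⟨hmax, _⟩ | ⟨hmax, _⟩ <;> rw [hw_def, hmax]
        · exact le_add_of_nonneg_left (pow_nonneg hr0 _)
        · exact le_add_of_nonneg_right (pow_nonneg hs0 _)
      have hsum1 : r^(n+1) + s^(n+1) ≤ 2*w^(n+1) := by
        have h1 := pow_le_pow_left₀ hr0 hrw (n+1)
        have h2 := pow_le_pow_left₀ hs0 hsw (n+1)
        linarith
      have hsum0 : r^n + s^n ≤ 2*w^n := by
        have h1 := pow_le_pow_left₀ hr0 hrw n
        have h2 := pow_le_pow_left₀ hs0 hsw n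
        linarith
      have hn1w : ((n:ℝ)+1) ≤ (d:ℝ) * w^2 := by
        have hx1 : ((n:ℝ)+1)/d ≤ t := by rw [ht_def]; gcongr; linarith
        have hx2 : t ≤ w^2 := by rw [← hr2]; exact pow_le_pow_left₀ hr0 hrw 2
        calc ((n:ℝ)+1) = (((n:ℝ)+1)/d)*d := by field_simp
          _ ≤ w^2 * d := mul_le_mul_of_nonneg_right (hx1.trans hx2) hd0.le
          _ = (d:ℝ) * w^2 := mul_comm _ _
      have step1 : |Kn d m (n+2)| ≤
          (2*((d:ℝ)*s) * (E^(n+1)*(r^(n+1)+s^(n+1))) + ((n:ℝ)+1)*(E^n*(r^n+s^n)))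
            / ((d:ℝ)/2) := by
        refine habs2.trans ?_
        have hmid : (2*((d:ℝ)*s) * |Kn d m (n+1)| + ((n:ℝ)+1) * |Kn d m n|)
              / ((d:ℝ) - ((n:ℝ)+1))
            ≤ (2*((d:ℝ)*s) * (E^(n+1)*(r^(n+1)+s^(n+1))) + ((n:ℝ)+1)*(E^n*(r^n+s^n)))
              / ((d:ℝ) - ((n:ℝ)+1)) := by
          gcongr
          all_goals first | exact hB1 | exact hB0 | positivity
        refine hmid.trans ?_
        gcongr
        all_goals first | positivity | linarith
      refine step1.trans ?_
      clear_value w r t E s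
      rw [div_le_iff₀ (by positivity : (0:ℝ) < (d:ℝ)/2)]
      have e1 : E^(n+1) = E^n * E := pow_succ E n
      have e2 : E^(n+2) = E^n * E * E := by rw [pow_succ, pow_succ]
      have key : (0:ℝ) ≤ (d:ℝ) * E^n * w^(n+2) * (E^2 - 8*E - 4) := by
        have h1 : (0:ℝ) ≤ E^2 - 8*E - 4 := by nlinarith [hE16]
        have h2 : (0:ℝ) ≤ (d:ℝ) * E^n * w^(n+2) :=
          mul_nonneg (mul_nonneg hd0.le hFpos.le) (pow_nonneg hw0 _)
        exact mul_nonneg h2 h1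
      calc 2*((d:ℝ)*s) * (E^(n+1)*(r^(n+1)+s^(n+1))) + ((n:ℝ)+1)*(E^n*(r^n+s^n))
          ≤ 2*((d:ℝ)*w) * (E^(n+1)*(2*w^(n+1))) + ((d:ℝ)*w^2)*(E^n*(2*w^n)) := by
            gcongr 2*((d:ℝ)*?_) * (E^(n+1)*?_) + ?_*(E^n*?_)
            all_goals first | exact hsw | exact hsum1 | exact hn1w | exact hsum0
        _ = 4*(d:ℝ)*(E^n*E)*w^(n+2) + 2*(d:ℝ)*E^n*w^(n+2) := by ring
        _ ≤ E^(n+2) * (w^(n+2)) * ((d:ℝ)/2) := by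
            rw [e2]
            nlinarith [key]
        _ ≤ E^(n+2) * (r^(n+2) + s^(n+2)) * ((d:ℝ)/2) := by
            gcongr
            all_goals first | positivity | exact hwn2

theorem stmt_12 (d m k : ℕ) (hm : m ≤ d) (hk : (k : ℝ) ≤ (d : ℝ) / 2) :
    |krav d m k| ≤
      Real.exp 1 ^ k * 2 ^ (3 * k) *
        (((k : ℝ) / d) ^ ((k : ℝ) / 2) + (|(d : ℝ) / 2 - m| / d) ^ k) := by
  have hkr : krav d m k = Kn d m k := krav_eq d m k hm
  rw [hkr]
  refine (Kn_bound d m hm k hk).trans ?_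
  have hpow : (8 * Real.exp 1 : ℝ) ^ k = Real.exp 1 ^ k * 2 ^ (3 * k) := by
    rw [mul_pow, pow_mul]
    norm_num
    ring
  rw [hpow]
end

section
/- There exist absolute constants C, c₀ > 0 such that for all nonnegative integers d, m, k with k ≤ d/2 and |d/2 − m| ≤ d/4, the normalized Kravchuk polynomial satisfies |K(d, m, k)| ≤ C·exp(−c₀·k). -/
open Finset Polynomial

noncomputable def Kp (n a b : ℕ) : ℝ :=
  (((1 - X) ^ a * (1 + X) ^ (n - a) : Polynomial ℝ)).coeff b

variable {n : ℕ}

lemma prod_sign (A B : Finset (Fin n)) :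
    (∏ i ∈ B, (if i ∈ A then (-1 : ℝ) else 1)) = (-1 : ℝ) ^ (A ∩ B).card := by
  rw [Finset.prod_ite, Finset.prod_const, Finset.prod_const, one_pow, mul_one]
  congr 1
  rw [Finset.filter_mem_eq_inter, Finset.inter_comm]

lemma gen_poly (A : Finset (Fin n)) :
    (∏ i : Fin n, ((if i ∈ A then (-1 : ℝ) else 1) • (X : Polynomial ℝ) + 1))
      = (1 - X) ^ A.card * (1 + X) ^ (n - A.card) := by
  have h : ∀ i : Fin n, ((if i ∈ A then (-1 : ℝ) else 1) • (X : Polynomial ℝ) + 1)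
      = if i ∈ A then (1 - X) else (1 + X) := by
    intro i; split <;> simp <;> ring
  simp only [h]
  rw [Finset.prod_ite, Finset.prod_const, Finset.prod_const]
  congr 2
  · rw [Finset.filter_mem_eq_inter, Finset.univ_inter]
  · have : Finset.filter (fun x => x ∉ A) Finset.univ = Aᶜ := by
      ext x; simp
    rw [this, Finset.card_compl, Fintype.card_fin]

lemma gen_poly_coeff (A : Finset (Fin n)) (b : ℕ) :
    (∏ i : Fin n, ((if i ∈ A then (-1 : ℝ) else 1) • (X : Polynomial ℝ) + 1)).coeff b
      = ∑ B ∈ Finset.powersetCard b (Finset.univ : Finset (Fin n)),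
          (-1 : ℝ) ^ (A ∩ B).card := by
  rw [Finset.prod_add, Polynomial.finset_sum_coeff]
  have h : ∀ B ∈ (Finset.univ : Finset (Fin n)).powerset,
      ((∏ i ∈ B, (if i ∈ A then (-1:ℝ) else 1) • (X : Polynomial ℝ)) *
        ∏ i ∈ Finset.univ \ B, (1 : Polynomial ℝ)).coeff b
      = if B.card = b then (-1 : ℝ) ^ (A ∩ B).card else 0 := by
    intro B _
    have e1 : (∏ i ∈ B, (if i ∈ A then (-1:ℝ) else 1) • (X : Polynomial ℝ))
        = Polynomial.C ((-1 : ℝ) ^ (A ∩ B).card) * X ^ B.card := by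
      simp only [Polynomial.smul_eq_C_mul]
      rw [Finset.prod_mul_distrib, Finset.prod_const, ← map_prod, prod_sign]
    rw [Finset.prod_const_one, mul_one, e1, Polynomial.coeff_C_mul,
      Polynomial.coeff_X_pow]
    simp [eq_comm]
  rw [Finset.sum_congr rfl h, Finset.powersetCard_eq_filter, Finset.sum_filter]


lemma inner_sum_eq {a : ℕ} (b : ℕ) (A : Finset (Fin n)) (hA : A.card = a) :
    (∑ B ∈ Finset.powersetCard b (Finset.univ : Finset (Fin n)),
        (-1 : ℝ) ^ (A ∩ B).card) = Kp n a b := by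
  rw [← gen_poly_coeff, Kp, ← hA, ← gen_poly]

lemma krav_eq_s13 {a : ℕ} (b : ℕ) (h : a ≤ n) :
    krav n a b = Kp n a b / (n.choose b) := by
  unfold krav
  rw [Finset.sum_congr rfl (fun A hA =>
    inner_sum_eq b A (Finset.mem_powersetCard.mp hA).2)]
  rw [Finset.sum_const, Finset.card_powersetCard, Finset.card_univ,
    Fintype.card_fin, nsmul_eq_mul]
  have hc : ((n.choose a : ℝ)) ≠ 0 := by exact_mod_cast (Nat.choose_pos h).ne'
  rw [mul_div_mul_left _ _ hc]

lemma sum_prod_sign (B B' : Finset (Fin n)) :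
    ∑ A ∈ (Finset.univ : Finset (Fin n)).powerset,
      ((-1 : ℝ) ^ (A ∩ B).card * (-1 : ℝ) ^ (A ∩ B').card)
    = if B = B' then (2 : ℝ) ^ n else 0 := by
  have key : ∀ A : Finset (Fin n),
      (-1 : ℝ) ^ (A ∩ B).card * (-1 : ℝ) ^ (A ∩ B').card
      = ∏ i ∈ A, ((if i ∈ B then (-1:ℝ) else 1) * (if i ∈ B' then (-1:ℝ) else 1)) := by
    intro A
    rw [Finset.prod_mul_distrib, prod_sign, prod_sign, Finset.inter_comm B,
      Finset.inter_comm B']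
  simp only [key]
  have expand : ∑ A ∈ (Finset.univ : Finset (Fin n)).powerset,
      ∏ i ∈ A, ((if i ∈ B then (-1:ℝ) else 1) * (if i ∈ B' then (-1:ℝ) else 1))
      = ∏ i : Fin n, (((if i ∈ B then (-1:ℝ) else 1) * (if i ∈ B' then (-1:ℝ) else 1)) + 1) := by
    rw [Finset.prod_add]
    exact Finset.sum_congr rfl fun A _ => by rw [Finset.prod_const_one, mul_one]
  rw [expand]
  by_cases h : B = B'
  · subst h
    rw [if_pos rfl]
    have : ∀ i : Fin n, ((if i ∈ B then (-1:ℝ) else 1) * (if i ∈ B then (-1:ℝ) else 1)) + 1 = 2 := by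
      intro i; split <;> norm_num
    rw [Finset.prod_congr rfl fun i _ => this i, Finset.prod_const, Finset.card_univ,
      Fintype.card_fin]
  · rw [if_neg h]
    obtain ⟨i, hi⟩ : ∃ i, ¬ (i ∈ B ↔ i ∈ B') := by
      by_contra hc
      push_neg at hc
      exact h (Finset.ext fun i => hc i)
    refine Finset.prod_eq_zero (Finset.mem_univ i) ?_
    rcases Classical.em (i ∈ B) with h1 | h1 <;> rcases Classical.em (i ∈ B') with h2 | h2 <;>
      simp [h1, h2] at hi ⊢

lemma parseval (b : ℕ) :
    ∑ A ∈ (Finset.univ : Finset (Fin n)).powerset,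
      (∑ B ∈ Finset.powersetCard b (Finset.univ : Finset (Fin n)),
        (-1 : ℝ) ^ (A ∩ B).card) ^ 2
    = 2 ^ n * (n.choose b) := by
  have e1 : ∀ A : Finset (Fin n),
      (∑ B ∈ Finset.powersetCard b (Finset.univ : Finset (Fin n)),
        (-1 : ℝ) ^ (A ∩ B).card) ^ 2
      = ∑ B ∈ Finset.powersetCard b (Finset.univ : Finset (Fin n)),
          ∑ B' ∈ Finset.powersetCard b (Finset.univ : Finset (Fin n)),
            ((-1 : ℝ) ^ (A ∩ B).card * (-1 : ℝ) ^ (A ∩ B').card) := by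
    intro A; rw [sq, Finset.sum_mul_sum]
  simp only [e1]
  rw [Finset.sum_comm]
  have e2 : ∀ B ∈ Finset.powersetCard b (Finset.univ : Finset (Fin n)),
      (∑ A ∈ (Finset.univ : Finset (Fin n)).powerset,
        ∑ B' ∈ Finset.powersetCard b (Finset.univ : Finset (Fin n)),
          ((-1 : ℝ) ^ (A ∩ B).card * (-1 : ℝ) ^ (A ∩ B').card)) = (2:ℝ)^n := by
    intro B hB
    rw [Finset.sum_comm]
    have : ∀ B' ∈ Finset.powersetCard b (Finset.univ : Finset (Fin n)),
        (∑ A ∈ (Finset.univ : Finset (Fin n)).powerset,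
          ((-1 : ℝ) ^ (A ∩ B).card * (-1 : ℝ) ^ (A ∩ B').card))
        = if B' = B then (2:ℝ)^n else 0 := by
      intro B' _
      rw [sum_prod_sign B B']
      simp [eq_comm]
    rw [Finset.sum_congr rfl this, Finset.sum_ite_eq' _ B fun _ => (2:ℝ)^n, if_pos hB]
  rw [Finset.sum_congr rfl e2, Finset.sum_const, Finset.card_powersetCard,
    Finset.card_univ, Fintype.card_fin, nsmul_eq_mul, mul_comm]

lemma parseval_bound (a b : ℕ) :
    (n.choose a : ℝ) * (Kp n a b) ^ 2 ≤ 2 ^ n * (n.choose b) := by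
  rw [← parseval b]
  have e : ∑ A ∈ Finset.powersetCard a (Finset.univ : Finset (Fin n)),
      (∑ B ∈ Finset.powersetCard b (Finset.univ : Finset (Fin n)),
        (-1 : ℝ) ^ (A ∩ B).card) ^ 2 = (n.choose a : ℝ) * (Kp n a b) ^ 2 := by
    rw [Finset.sum_congr rfl (fun A hA => by
      rw [inner_sum_eq b A (Finset.mem_powersetCard.mp hA).2])]
    rw [Finset.sum_const, Finset.card_powersetCard, Finset.card_univ,
      Fintype.card_fin, nsmul_eq_mul]
  rw [← e]
  refine Finset.sum_le_sum_of_subset_of_nonneg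
    (fun B hB => Finset.mem_powerset.mpr (Finset.mem_powersetCard.mp hB).1)
    (fun A _ _ => sq_nonneg _)

lemma polyrec (a c : ℕ) :
    (1 - X) * (1 + X) * derivative ((1 - X) ^ a * (1 + X) ^ c : Polynomial ℝ)
    = (Polynomial.C ((c : ℝ) - a) - Polynomial.C ((a : ℝ) + c) * X)
        * ((1 - X) ^ a * (1 + X) ^ c) := by
  rcases a with _ | a' <;> rcases c with _ | c' <;>
    · simp only [derivative_mul, derivative_pow, derivative_one, derivative_sub,
        derivative_add, derivative_X, Nat.add_sub_cancel, Nat.cast_add, Nat.cast_ofNat,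
        Nat.cast_zero, Nat.cast_one, pow_zero, Nat.cast_succ]
      push_cast
      simp only [map_add, map_sub, map_neg, map_one, map_ofNat, Polynomial.C_eq_natCast,
        Polynomial.C_1, Polynomial.C_0, map_zero]
      ring

lemma Kp_rec {a : ℕ} (h : a ≤ n) (b : ℕ) :
    ((b : ℝ) + 2) * Kp n a (b + 2)
      = ((n : ℝ) - 2 * a) * Kp n a (b + 1) - ((n : ℝ) - b) * Kp n a b := by
  have hc : ((n - a : ℕ) : ℝ) = (n : ℝ) - a := Nat.cast_sub h
  have hrec := polyrec a (n - a)
  set f : Polynomial ℝ := (1 - X) ^ a * (1 + X) ^ (n - a) with hf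
  have lhs_eq : (1 - X) * (1 + X) * derivative f = derivative f - X ^ 2 * derivative f := by
    ring
  have key := congrArg (fun p => Polynomial.coeff p (b + 1)) hrec
  simp only [lhs_eq] at key
  have c1 : (derivative f).coeff (b + 1) = f.coeff (b + 2) * ((b : ℝ) + 2) := by
    have := Polynomial.coeff_derivative f (b + 1)
    rw [this]; push_cast; ring_nf
  have c2 : (X ^ 2 * derivative f).coeff (b + 1) = (b : ℝ) * f.coeff b := by
    cases b with
    | zero =>
      rw [Polynomial.coeff_X_pow_mul' (derivative f) 2 1]
      norm_num
    | succ b' =>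
      have : b' + 1 + 1 = b' + 2 := rfl
      rw [this, Polynomial.coeff_X_pow_mul (derivative f) 2 b',
        Polynomial.coeff_derivative]
      push_cast; ring
  have c3 : ((Polynomial.C (((n - a : ℕ) : ℝ) - a) - Polynomial.C ((a : ℝ) + (n - a : ℕ)) * X) * f).coeff (b + 1)
      = (((n : ℝ)) - 2 * a) * f.coeff (b + 1) - (n : ℝ) * f.coeff b := by
    rw [sub_mul, Polynomial.coeff_sub, Polynomial.coeff_C_mul, mul_assoc,
      Polynomial.coeff_C_mul, Polynomial.coeff_X_mul]
    rw [hc]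
    have : (a : ℝ) + ((n : ℝ) - a) = (n : ℝ) := by ring
    rw [this]
    ring
  simp only [Polynomial.coeff_sub, c1, c2, c3] at key
  unfold Kp
  rw [← hf]
  linarith [key]

lemma Kp_zero (a : ℕ) : Kp n a 0 = 1 := by
  unfold Kp
  rw [Polynomial.coeff_zero_eq_eval_zero]
  simp

lemma Kp_one {a : ℕ} (h : a ≤ n) : Kp n a 1 = (n : ℝ) - 2 * a := by
  have hc : ((n - a : ℕ) : ℝ) = (n : ℝ) - a := Nat.cast_sub h
  have key := congrArg (Polynomial.eval 0) (polyrec a (n - a))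
  simp only [Polynomial.eval_mul, Polynomial.eval_sub, Polynomial.eval_add,
    Polynomial.eval_one, Polynomial.eval_X, Polynomial.eval_pow, Polynomial.eval_C] at key
  unfold Kp
  have : ((1 - X) ^ a * (1 + X) ^ (n - a) : Polynomial ℝ).coeff 1
      = (derivative ((1 - X) ^ a * (1 + X) ^ (n - a) : Polynomial ℝ)).coeff 0 := by
    rw [Polynomial.coeff_derivative]
    norm_num
  rw [this, Polynomial.coeff_zero_eq_eval_zero]
  rw [hc] at key
  simp only [Polynomial.derivative_mul, Polynomial.eval_add, Polynomial.eval_mul,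
    Polynomial.eval_pow, Polynomial.eval_sub, Polynomial.eval_one, Polynomial.eval_X] at key ⊢
  norm_num at key ⊢
  linarith

lemma krav_rec {a : ℕ} (h : a ≤ n) {b : ℕ} (hb : b + 2 ≤ n) :
    krav n a (b + 2)
      = (((n : ℝ) - 2 * a) * krav n a (b + 1) - ((b : ℝ) + 1) * krav n a b)
          / ((n : ℝ) - b - 1) := by
  have hb1 : b + 1 ≤ n := by omega
  have hb0 : b ≤ n := by omega
  have hc2 : (0:ℝ) < (n.choose (b+2) : ℝ) := by exact_mod_cast Nat.choose_pos hb
  have hc1 : (0:ℝ) < (n.choose (b+1) : ℝ) := by exact_mod_cast Nat.choose_pos hb1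
  have hc0 : (0:ℝ) < (n.choose b : ℝ) := by exact_mod_cast Nat.choose_pos hb0
  have hnb : (0:ℝ) < (n : ℝ) - b - 1 := by
    have : (b:ℝ) + 2 ≤ n := by exact_mod_cast hb
    linarith
  have f1 : (n.choose (b+2) : ℝ) * ((b:ℝ) + 2) = (n.choose (b+1) : ℝ) * ((n:ℝ) - b - 1) := by
    have := Nat.choose_succ_right_eq n (b+1)
    have hcast : ((n - (b+1) : ℕ) : ℝ) = (n:ℝ) - b - 1 := by
      rw [Nat.cast_sub hb1]; push_cast; ring
    have := congrArg (fun x : ℕ => (x : ℝ)) this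
    push_cast at this
    rw [← hcast]
    push_cast
    linarith [this]
  have f2 : (n.choose (b+1) : ℝ) * ((b:ℝ) + 1) = (n.choose b : ℝ) * ((n:ℝ) - b) := by
    have := Nat.choose_succ_right_eq n b
    have hcast : ((n - b : ℕ) : ℝ) = (n:ℝ) - b := Nat.cast_sub hb0
    have := congrArg (fun x : ℕ => (x : ℝ)) this
    push_cast at this
    rw [← hcast]
    push_cast
    linarith [this]
  have f3 := Kp_rec h b
  have e0 : Kp n a b = (n.choose b : ℝ) * krav n a b := by
    rw [krav_eq_s13 b h]; field_simp
  have e1 : Kp n a (b+1) = (n.choose (b+1) : ℝ) * krav n a (b+1) := by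
    rw [krav_eq_s13 (b+1) h]; field_simp
  have e2 : Kp n a (b+2) = (n.choose (b+2) : ℝ) * krav n a (b+2) := by
    rw [krav_eq_s13 (b+2) h]; field_simp
  rw [e0, e1, e2] at f3
  rw [eq_div_iff (ne_of_gt hnb)]
  have cancel : (n.choose (b+1) : ℝ) * (krav n a (b+2) * ((n:ℝ) - b - 1))
      = (n.choose (b+1) : ℝ) * ((((n : ℝ) - 2 * a) * krav n a (b + 1) - ((b : ℝ) + 1) * krav n a b)) := by
    linear_combination (-(krav n a (b+2))) * f1 + f3 + (krav n a b) * f2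
  exact mul_left_cancel₀ (ne_of_gt hc1) cancel

lemma caseA {a : ℕ} (ha1 : n ≤ 4 * a) (ha2 : 4 * a ≤ 3 * n) :
    ∀ b : ℕ, 5 * b ≤ n → |krav n a b| ≤ (23 / 25 : ℝ) ^ b := by
  have han : a ≤ n := by omega
  have hs : |(n : ℝ) - 2 * a| ≤ (n : ℝ) / 2 := by
    have h1 : (n : ℝ) ≤ 4 * a := by exact_mod_cast ha1
    have h2 : (4 : ℝ) * a ≤ 3 * n := by exact_mod_cast ha2
    rw [abs_le]; constructor <;> linarith
  intro b
  induction b using Nat.strong_induction_on with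
  | _ b ih =>
    match b with
    | 0 =>
      intro _
      rw [krav_eq_s13 0 han, Kp_zero, Nat.choose_zero_right]
      norm_num
    | 1 =>
      intro h5
      have hn : 5 ≤ n := by omega
      have hnR : (0:ℝ) < n := by positivity
      rw [krav_eq_s13 1 han, Kp_one han, Nat.choose_one_right]
      rw [abs_div, abs_of_pos hnR]
      rw [div_le_iff₀ hnR, pow_one]
      calc |(n:ℝ) - 2*a| ≤ (n:ℝ)/2 := hs
        _ ≤ 23/25 * n := by linarith
    | (b + 2) =>
      intro h5
      have hb2n : b + 2 ≤ n := by omega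
      have hbn : (5 : ℝ) * b + 10 ≤ n := by exact_mod_cast h5
      have hnb : (0:ℝ) < (n : ℝ) - b - 1 := by linarith
      have ih1 := ih (b+1) (by omega) (by omega)
      have ih0 := ih b (by omega) (by omega)
      rw [krav_rec han hb2n]
      rw [abs_div, abs_of_pos hnb, div_le_iff₀ hnb]
      have habs : |((n : ℝ) - 2 * a) * krav n a (b + 1) - ((b : ℝ) + 1) * krav n a b|
          ≤ ((n:ℝ)/2) * (23/25)^(b+1) + ((b:ℝ)+1) * (23/25)^b := by
        calc |((n : ℝ) - 2 * a) * krav n a (b + 1) - ((b : ℝ) + 1) * krav n a b|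
            ≤ |((n : ℝ) - 2 * a) * krav n a (b + 1)| + |((b : ℝ) + 1) * krav n a b| := abs_sub _ _
          _ = |(n : ℝ) - 2 * a| * |krav n a (b + 1)| + ((b : ℝ) + 1) * |krav n a b| := by
              rw [abs_mul, abs_mul, abs_of_pos (by positivity : (0:ℝ) < (b:ℝ)+1)]
          _ ≤ ((n:ℝ)/2) * (23/25)^(b+1) + ((b:ℝ)+1) * (23/25)^b := by
              have h1 : |(n : ℝ) - 2 * a| * |krav n a (b + 1)| ≤ ((n:ℝ)/2) * (23/25)^(b+1) :=
                mul_le_mul hs ih1 (abs_nonneg _) (by linarith)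
              have h2 : ((b : ℝ) + 1) * |krav n a b| ≤ ((b:ℝ)+1) * (23/25)^b :=
                mul_le_mul_of_nonneg_left ih0 (by positivity)
              linarith
      refine habs.trans ?_
      have key : (n:ℝ)/2 * (23/25) + ((b:ℝ)+1) ≤ (23/25)^2 * ((n:ℝ) - b - 1) := by
        nlinarith [hbn]
      have expand : ((n:ℝ)/2) * (23/25)^(b+1) + ((b:ℝ)+1) * (23/25)^b
          = (23/25)^b * ((n:ℝ)/2 * (23/25) + ((b:ℝ)+1)) := by ring
      have expand2 : (23/25 : ℝ)^(b+2) * ((n:ℝ) - b - 1)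
          = (23/25)^b * ((23/25)^2 * ((n:ℝ) - b - 1)) := by ring
      rw [expand, expand2]
      exact mul_le_mul_of_nonneg_left key (by positivity)


open Finset

def Tt (n k j : ℕ) : ℕ := n.choose j * (k ^ j * (n - k) ^ (n - j))

lemma Tt_sum {n k : ℕ} (h : k ≤ n) : ∑ j ∈ range (n + 1), Tt n k j = n ^ n := by
  have e : (k + (n - k)) ^ n = ∑ j ∈ range (n + 1), k ^ j * (n - k) ^ (n - j) * n.choose j :=
    add_pow k (n - k) n
  rw [Nat.add_sub_cancel' h] at e
  rw [e]
  exact Finset.sum_congr rfl fun j _ => by rw [Tt]; ring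

lemma Tt_step_up {n k j : ℕ} (hk : k ≤ n) (hj : j < k) : Tt n k j ≤ Tt n k (j + 1) := by
  have key : (j + 1) * Tt n k j ≤ (j + 1) * Tt n k (j + 1) := by
    have a1 : (j + 1) * Tt n k (j + 1)
        = (n.choose j * (k ^ j * (n - k) ^ (n - (j+1)))) * (k * (n - j)) := by
      have hch := Nat.choose_succ_right_eq n j
      rw [Tt, show (j + 1) * (n.choose (j + 1) * (k ^ (j + 1) * (n - k) ^ (n - (j + 1))))
        = (n.choose (j+1) * (j+1)) * (k ^ (j + 1) * (n - k) ^ (n - (j + 1))) from by ring, hch]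
      ring
    have a2 : (j + 1) * Tt n k j
        = (n.choose j * (k ^ j * (n - k) ^ (n - (j+1)))) * ((j + 1) * (n - k)) := by
      rw [Tt]
      have : n - j = (n - (j + 1)) + 1 := by omega
      rw [this, pow_succ]
      ring
    rw [a1, a2]
    exact Nat.mul_le_mul_left _ (Nat.mul_le_mul (by omega) (by omega))
  exact Nat.le_of_mul_le_mul_left key (by omega)

lemma Tt_step_down {n k j : ℕ} (hk : k ≤ j) (hj : j < n) : Tt n k (j + 1) ≤ Tt n k j := by
  have key : (j + 1) * Tt n k (j + 1) ≤ (j + 1) * Tt n k j := by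
    have a1 : (j + 1) * Tt n k (j + 1)
        = (n.choose j * (k ^ j * (n - k) ^ (n - (j+1)))) * (k * (n - j)) := by
      have hch := Nat.choose_succ_right_eq n j
      rw [Tt, show (j + 1) * (n.choose (j + 1) * (k ^ (j + 1) * (n - k) ^ (n - (j + 1))))
        = (n.choose (j+1) * (j+1)) * (k ^ (j + 1) * (n - k) ^ (n - (j + 1))) from by ring, hch]
      ring
    have a2 : (j + 1) * Tt n k j
        = (n.choose j * (k ^ j * (n - k) ^ (n - (j+1)))) * ((j + 1) * (n - k)) := by
      rw [Tt]
      have : n - j = (n - (j + 1)) + 1 := by omega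
      rw [this, pow_succ]
      ring
    rw [a1, a2]
    exact Nat.mul_le_mul_left _ (Nat.mul_le_mul (by omega) (by omega))
  exact Nat.le_of_mul_le_mul_left key (by omega)

lemma Tt_le {n k : ℕ} (h : k ≤ n) : ∀ j, Tt n k j ≤ Tt n k k := by
  have up : ∀ m, m ≤ k → Tt n k (k - m) ≤ Tt n k k := by
    intro m
    induction m with
    | zero => intro _; simp
    | succ m' ihm =>
      intro hm
      have h1 : k - (m' + 1) < k := by omega
      have e : k - (m' + 1) + 1 = k - m' := by omega
      calc Tt n k (k - (m' + 1)) ≤ Tt n k (k - (m' + 1) + 1) := Tt_step_up h h1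
        _ = Tt n k (k - m') := by rw [e]
        _ ≤ Tt n k k := ihm (by omega)
  have down : ∀ m, k + m ≤ n → Tt n k (k + m) ≤ Tt n k k := by
    intro m
    induction m with
    | zero => intro _; simp
    | succ m' ihm =>
      intro hm
      have : k + (m' + 1) = (k + m') + 1 := by omega
      rw [this]
      calc Tt n k (k + m' + 1) ≤ Tt n k (k + m') := Tt_step_down (by omega) (by omega)
        _ ≤ Tt n k k := ihm (by omega)
  intro j
  by_cases hj : j ≤ n
  · rcases le_or_gt j k with hc | hc
    · have : j = k - (k - j) := by omega
      rw [this]; exact up (k - j) (by omega)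
    · have : j = k + (j - k) := by omega
      rw [this]; exact down (j - k) (by omega)
  · have : Tt n k j = 0 := by
      rw [Tt, Nat.choose_eq_zero_of_lt (by omega)]; ring
    simp [this]

lemma ent {n k : ℕ} (h : k ≤ n) :
    n ^ n ≤ (n + 1) * (n.choose k * (k ^ k * (n - k) ^ (n - k))) := by
  rw [← Tt_sum h]
  calc ∑ j ∈ range (n + 1), Tt n k j ≤ ∑ j ∈ range (n + 1), Tt n k k :=
        Finset.sum_le_sum fun j _ => Tt_le h j
    _ = (n + 1) * Tt n k k := by rw [Finset.sum_const, Finset.card_range, smul_eq_mul]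


open Real Set

noncomputable def Gf (N : ℝ) (x : ℝ) : ℝ := x * Real.log x + (N - x) * Real.log (N - x)

lemma Gf_convex {N : ℝ} (hN : 0 ≤ N) : ConvexOn ℝ (Icc 0 N) (Gf N) := by
  have c1 : ConvexOn ℝ (Icc (0:ℝ) N) (fun x => x * Real.log x) :=
    Real.convexOn_mul_log.subset (fun x hx => hx.1) (convex_Icc _ _)
  have c2 : ConvexOn ℝ (Icc (0:ℝ) N) (fun x => (N - x) * Real.log (N - x)) := by
    let g : ℝ →ᵃ[ℝ] ℝ := AffineMap.lineMap N (N - 1)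
    have hg : ∀ x : ℝ, g x = N - x := by
      intro x
      simp [g, AffineMap.lineMap_apply]
      ring
    have hpre : g ⁻¹' (Ici (0:ℝ)) = Iic N := by
      ext x; simp [hg, sub_nonneg]
    have := Real.convexOn_mul_log.comp_affineMap g
    rw [hpre] at this
    refine ConvexOn.subset (t := Iic N) ?_ (fun x hx => hx.2) (convex_Icc _ _)
    have e : ((fun x => x * Real.log x) ∘ ⇑g) = fun x => (N - x) * Real.log (N - x) := by
      funext x
      simp [Function.comp, hg]
    rw [e] at this
    exact this
  exact c1.add c2

lemma Gf_le_max {N lo hi x : ℝ} (hN : 0 ≤ N) (hlo : 0 ≤ lo) (hhi : hi ≤ N)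
    (hx : x ∈ Icc lo hi) : Gf N x ≤ max (Gf N lo) (Gf N hi) := by
  have hlh : lo ≤ hi := le_trans hx.1 hx.2
  have hseg : x ∈ segment ℝ lo hi := by
    rw [segment_eq_Icc hlh]; exact hx
  exact (Gf_convex hN).le_on_segment ⟨hlo, le_trans (le_trans hx.1 hx.2) hhi⟩
    ⟨le_trans hlo (le_trans hx.1 hx.2), hhi⟩ hseg

lemma L3le : Real.log 3 ≤ (8/5) * Real.log 2 := by
  have h : ((3:ℝ))^5 ≤ 2^8 := by norm_num
  have := Real.log_le_log (by positivity) h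
  rw [Real.log_pow, Real.log_pow] at this
  push_cast at this
  linarith

lemma L5ge : (16/7) * Real.log 2 ≤ Real.log 5 := by
  have h : ((2:ℝ))^16 ≤ 5^7 := by norm_num
  have := Real.log_le_log (by positivity) h
  rw [Real.log_pow, Real.log_pow] at this
  push_cast at this
  linarith

lemma log4 : Real.log 4 = 2 * Real.log 2 := by
  rw [show (4:ℝ) = 2^2 by norm_num, Real.log_pow]; push_cast; ring

lemma Gf_quarter {N : ℝ} (hN : 0 < N) :
    Gf N (N/4) ≤ N * Real.log N - (4/5) * Real.log 2 * N := by
  have h1 : Real.log (N/4) = Real.log N - 2 * Real.log 2 := by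
    rw [Real.log_div (ne_of_gt hN) (by norm_num), log4]
  have h2 : Real.log (N - N/4) = Real.log 3 + Real.log N - 2 * Real.log 2 := by
    rw [show N - N/4 = 3 * N / 4 by ring, Real.log_div (by positivity) (by norm_num),
      Real.log_mul (by norm_num) (ne_of_gt hN), log4]
    try ring
  rw [Gf, h1, h2]
  have := L3le
  have hL2 : (0:ℝ) ≤ Real.log 2 := Real.log_nonneg (by norm_num)
  nlinarith [hN]

lemma Gf_threequarter {N : ℝ} (hN : 0 < N) :
    Gf N (3*N/4) ≤ N * Real.log N - (4/5) * Real.log 2 * N := by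
  have h1 : Real.log (3*N/4) = Real.log 3 + Real.log N - 2 * Real.log 2 := by
    rw [Real.log_div (by positivity) (by norm_num),
      Real.log_mul (by norm_num) (ne_of_gt hN), log4]
    try ring
  have h2 : Real.log (N - 3*N/4) = Real.log N - 2 * Real.log 2 := by
    rw [show N - 3*N/4 = N/4 by ring, Real.log_div (ne_of_gt hN) (by norm_num), log4]
  rw [Gf, h1, h2]
  have := L3le
  have hL2 : (0:ℝ) ≤ Real.log 2 := Real.log_nonneg (by norm_num)
  nlinarith [hN]

lemma Gf_fifth {N : ℝ} (hN : 0 < N) :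
    Gf N (N/5) ≤ N * Real.log N - (24/35) * Real.log 2 * N := by
  have h1 : Real.log (N/5) = Real.log N - Real.log 5 := by
    rw [Real.log_div (ne_of_gt hN) (by norm_num)]
  have h2 : Real.log (N - N/5) = 2 * Real.log 2 + Real.log N - Real.log 5 := by
    rw [show N - N/5 = 4 * N / 5 by ring, Real.log_div (by positivity) (by norm_num),
      Real.log_mul (by norm_num) (ne_of_gt hN), log4]
    try ring
  rw [Gf, h1, h2]
  have := L5ge
  have hL2 : (0:ℝ) ≤ Real.log 2 := Real.log_nonneg (by norm_num)
  nlinarith [hN]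

lemma Gf_half {N : ℝ} (hN : 0 < N) :
    Gf N (N/2) ≤ N * Real.log N - (24/35) * Real.log 2 * N := by
  have h1 : Real.log (N/2) = Real.log N - Real.log 2 := by
    rw [Real.log_div (ne_of_gt hN) (by norm_num)]
  have h2 : N - N/2 = N/2 := by ring
  rw [Gf, h2, h1]
  have hL2 : (0:ℝ) ≤ Real.log 2 := Real.log_nonneg (by norm_num)
  nlinarith [hN]

lemma caseB {a k : ℕ} (ha1 : n ≤ 4 * a) (ha2 : 4 * a ≤ 3 * n)
    (hk1 : 2 * k ≤ n) (hk2 : n < 5 * k) :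
    |krav n a k| ≤ 100 * Real.exp (-(1/13) * k) := by
  have hk0 : 1 ≤ k := by omega
  have hn2 : 2 ≤ n := by omega
  have ha0 : 1 ≤ a := by omega
  have han : a ≤ n := by omega
  have haln : a < n := by omega
  have hkln : k < n := by omega
  set Ca := (n.choose a : ℝ) with hCa
  set Ck := (n.choose k : ℝ) with hCk
  have hCa0 : 0 < Ca := by rw [hCa]; exact_mod_cast Nat.choose_pos han
  have hCk0 : 0 < Ck := by rw [hCk]; exact_mod_cast Nat.choose_pos (le_of_lt hkln)
  have hnR : (0:ℝ) < n := by positivity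
  have haR : (0:ℝ) < a := by positivity
  have hkR : (0:ℝ) < k := by positivity
  have hnaR : (0:ℝ) < (n:ℝ) - a := by
    have : (a:ℝ) < n := by exact_mod_cast haln
    linarith
  have hnkR : (0:ℝ) < (n:ℝ) - k := by
    have : (k:ℝ) < n := by exact_mod_cast hkln
    linarith
  -- squared bound from Parseval
  have hsq : (krav n a k)^2 ≤ 2^n / (Ca * Ck) := by
    rw [krav_eq_s13 k han, div_pow]
    rw [div_le_div_iff₀ (by positivity) (by positivity)]
    have hp := parseval_bound (n := n) a k
    nlinarith [hp, hCk0, hCa0, sq_nonneg (Kp n a k)]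
  -- log lower bound for binomial coefficients
  have logbound : ∀ j : ℕ, j ≤ n → (0:ℝ) < j → (0:ℝ) < (n:ℝ) - j →
      (n:ℝ) * Real.log n - Real.log ((n:ℝ)+1) - Gf n j ≤ Real.log (n.choose j) := by
    intro j hj hj0 hnj0
    have hent := ent hj
    have hcast : ((n:ℝ))^n ≤ ((n:ℝ)+1) * ((n.choose j : ℝ) * ((j:ℝ)^j * ((n:ℝ)-j)^(n-j))) := by
      have := hent
      have hc : (((n+1) * (n.choose j * (j ^ j * (n - j) ^ (n - j))) : ℕ) : ℝ)
          = ((n:ℝ)+1) * ((n.choose j : ℝ) * ((j:ℝ)^j * ((n:ℝ)-j)^(n-j))) := by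
        push_cast [Nat.cast_sub hj]
        ring
      calc ((n:ℝ))^n = ((n^n : ℕ) : ℝ) := by push_cast; ring
        _ ≤ (((n+1) * (n.choose j * (j ^ j * (n - j) ^ (n - j))) : ℕ) : ℝ) := by
            exact_mod_cast hent
        _ = _ := hc
    have hp1 : ((n:ℝ)+1) ≠ 0 := by positivity
    have hp2 : ((n.choose j : ℕ) : ℝ) ≠ 0 := by
      have : 0 < n.choose j := Nat.choose_pos hj
      exact_mod_cast this.ne'
    have hp3 : ((j:ℝ))^j ≠ 0 := (pow_pos hj0 j).ne'
    have hp4 : (((n:ℝ)-j))^(n-j) ≠ 0 := (pow_pos hnj0 (n-j)).ne'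
    have hlog := Real.log_le_log (by positivity) hcast
    rw [Real.log_pow] at hlog
    rw [Real.log_mul hp1 (mul_ne_zero hp2 (mul_ne_zero hp3 hp4)),
      Real.log_mul hp2 (mul_ne_zero hp3 hp4),
      Real.log_mul hp3 hp4, Real.log_pow, Real.log_pow] at hlog
    have hGf : Gf n j = (j:ℝ) * Real.log j + ((n:ℝ) - j) * Real.log ((n:ℝ) - j) := rfl
    have hcast2 : ((n - j : ℕ) : ℝ) = (n:ℝ) - j := Nat.cast_sub hj
    rw [hcast2] at hlog
    rw [hGf]
    linarith
  have hLCa := logbound a han haR hnaR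
  have hLCk := logbound k (le_of_lt hkln) hkR hnkR
  -- Gf bounds
  have hGa : Gf n a ≤ (n:ℝ) * Real.log n - (4/5) * Real.log 2 * n := by
    have h1 : (a:ℝ) ∈ Set.Icc ((n:ℝ)/4) (3*(n:ℝ)/4) := by
      constructor
      · have : (n:ℝ) ≤ 4*a := by exact_mod_cast ha1
        linarith
      · have : (4:ℝ)*a ≤ 3*n := by exact_mod_cast ha2
        linarith
    have := Gf_le_max (N := (n:ℝ)) (by positivity) (by positivity) (by linarith) h1
    refine this.trans ?_
    exact max_le (Gf_quarter hnR) (Gf_threequarter hnR)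
  have hGk : Gf n k ≤ (n:ℝ) * Real.log n - (24/35) * Real.log 2 * n := by
    have h1 : (k:ℝ) ∈ Set.Icc ((n:ℝ)/5) ((n:ℝ)/2) := by
      constructor
      · have : (n:ℝ) < 5*k := by exact_mod_cast hk2
        linarith
      · have : (2:ℝ)*k ≤ n := by exact_mod_cast hk1
        linarith
    have := Gf_le_max (N := (n:ℝ)) (by positivity) (by positivity) (by linarith) h1
    refine this.trans ?_
    exact max_le (Gf_fifth hnR) (Gf_half hnR)
  -- numeric facts
  have hL2lo : (0.6931471803 : ℝ) < Real.log 2 := Real.log_two_gt_d9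
  have hlog10000 : 12 * Real.log 2 ≤ Real.log 10000 := by
    have h : ((2:ℝ))^12 ≤ 10000 := by norm_num
    have := Real.log_le_log (by positivity) h
    rw [Real.log_pow] at this
    push_cast at this
    linarith
  have hlogn1 : Real.log ((n:ℝ)+1) ≤ ((n:ℝ)+1)/8 + 3 * Real.log 2 - 1 := by
    have h8 : Real.log (((n:ℝ)+1)/8) ≤ ((n:ℝ)+1)/8 - 1 :=
      Real.log_le_sub_one_of_pos (by positivity)
    have : Real.log (((n:ℝ)+1)/8) = Real.log ((n:ℝ)+1) - 3 * Real.log 2 := by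
      rw [Real.log_div (by positivity) (by norm_num),
        show (8:ℝ) = 2^3 by norm_num, Real.log_pow]
      push_cast; ring
    linarith
  -- main inequality on logs
  have main : (n:ℝ) * Real.log 2 + (2/13) * k
      ≤ Real.log 10000 + Real.log Ca + Real.log Ck := by
    have h2k : (2:ℝ)*k ≤ n := by exact_mod_cast hk1
    have hn0 : (0:ℝ) ≤ n := le_of_lt hnR
    rw [← hCa] at hLCa
    rw [← hCk] at hLCk
    have hL2n : (0.6931471803:ℝ) * n ≤ Real.log 2 * n :=
      mul_le_mul_of_nonneg_right (le_of_lt hL2lo) hn0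
    linarith
  -- convert to the claimed bound
  have hRHSpos : (0:ℝ) < 100 * Real.exp (-(1/13) * k) := by positivity
  have sqform : 2^n / (Ca * Ck) ≤ (100 * Real.exp (-(1/13) * k))^2 := by
    rw [div_le_iff₀ (by positivity)]
    have hexp2 : Real.exp (-(1/13) * k) ^ 2 = Real.exp (-(2/13) * k) := by
      rw [← Real.exp_nat_mul]
      congr 1
      push_cast
      ring
    have expand : (100 * Real.exp (-(1/13) * k))^2 * (Ca * Ck)
        = 10000 * Real.exp (-(2/13) * k) * (Ca * Ck) := by
      rw [mul_pow, hexp2]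
      norm_num
    rw [expand]
    have logle : Real.log ((2:ℝ)^n) ≤ Real.log (10000 * Real.exp (-(2/13) * k) * (Ca * Ck)) := by
      rw [Real.log_pow, Real.log_mul (by positivity) (by positivity),
        Real.log_mul (by positivity) (Real.exp_ne_zero _),
        Real.log_mul (ne_of_gt hCa0) (ne_of_gt hCk0), Real.log_exp]
      linarith [main]
    have := Real.exp_le_exp.mpr logle
    rwa [Real.exp_log (by positivity), Real.exp_log (by positivity)] at this
  have final : (krav n a k)^2 ≤ (100 * Real.exp (-(1/13) * k))^2 := le_trans hsq sqform
  nlinarith [abs_nonneg (krav n a k), sq_abs (krav n a k), hRHSpos, final]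

theorem stmt_13 :
    ∃ C > (0 : ℝ), ∃ c₀ > (0 : ℝ), ∀ d m k : ℕ,
      (k : ℝ) ≤ (d : ℝ) / 2 → |(d : ℝ) / 2 - m| ≤ (d : ℝ) / 4 →
      |krav d m k| ≤ C * Real.exp (-c₀ * k) := by
  refine ⟨100, by norm_num, 1/13, by norm_num, ?_⟩
  intro d m k hk hm
  have hk' : 2 * k ≤ d := by
    have : ((2*k : ℕ) : ℝ) ≤ (d : ℝ) := by push_cast; linarith
    exact_mod_cast this
  obtain ⟨h1, h2⟩ := abs_le.mp hm
  have hm1 : d ≤ 4 * m := by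
    have : ((d : ℕ) : ℝ) ≤ ((4*m : ℕ) : ℝ) := by push_cast; linarith
    exact_mod_cast this
  have hm2 : 4 * m ≤ 3 * d := by
    have : ((4*m : ℕ) : ℝ) ≤ ((3*d : ℕ) : ℝ) := by push_cast; linarith
    exact_mod_cast this
  have hc0 : -(1/13 : ℝ) * k = -(1/13 : ℝ) * k := rfl
  by_cases hcase : 5 * k ≤ d
  · have hA := caseA hm1 hm2 k hcase
    have hρ : (23/25 : ℝ) ≤ Real.exp (-(1/13)) := by
      have h13 : Real.exp (1/13 : ℝ) ^ (13:ℕ) = Real.exp 1 := by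
        rw [← Real.exp_nat_mul]; norm_num
      have hbig : Real.exp (1/13 : ℝ) ≤ 25/23 := by
        have hpow : Real.exp (1/13 : ℝ) ^ (13:ℕ) ≤ (25/23 : ℝ)^(13:ℕ) := by
          rw [h13]
          calc Real.exp 1 ≤ 2.7182818286 := le_of_lt Real.exp_one_lt_d9
            _ ≤ (25/23 : ℝ)^(13:ℕ) := by norm_num
        exact le_of_pow_le_pow_left₀ (by norm_num) (by norm_num) hpow
      rw [Real.exp_neg]
      rw [show (23/25 : ℝ) = (25/23 : ℝ)⁻¹ by norm_num]
      exact inv_anti₀ (Real.exp_pos _) hbig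
    have hpow : (23/25 : ℝ)^k ≤ Real.exp (-(1/13)) ^ k :=
      pow_le_pow_left₀ (by norm_num) hρ k
    have hexp : Real.exp (-(1/13) : ℝ) ^ k = Real.exp (-(1/13) * k) := by
      rw [← Real.exp_nat_mul]
      congr 1
      ring
    calc |krav d m k| ≤ (23/25 : ℝ)^k := hA
      _ ≤ Real.exp (-(1/13) * k) := by rw [← hexp]; exact hpow
      _ ≤ 100 * Real.exp (-(1/13) * k) := by
          have := Real.exp_pos (-(1/13) * (k:ℝ))
          linarith
  · push_neg at hcase
    exact caseB hm1 hm2 hk' hcase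
end
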